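/- Let S = diag(s) be an m×m diagonal matrix with non-increasing positive entries, V an m×m orthogonal matrix, E an m×k real matrix, and 1 ≤ k ≤ k̃ ≤ m. Then σ_min(SV*E) ≥ s_{k̃} · σ_min(P_{k̃} V* E), where P_{k̃} ∈ ℝ^{k̃×m} projects onto the first k̃ coordinates and σ_min denotes the k-th (smallest nontrivial) singular value of the respective m×k and k̃×k matrices. -/

import Mathlib

/-- The j-th largest singular value of a rectangular matrix, via the
Courant–Fischer max-min characterization. -/
noncomputable def singVal {m k : ℕ} (A : Matrix (Fin m) (Fin k) ℝ) (j : ℕ) : ℝ :=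
  ⨆ W : {W : Submodule ℝ (EuclideanSpace ℝ (Fin k)) // Module.finrank ℝ W = j},
    ⨅ v : {v : EuclideanSpace ℝ (Fin k) // v ∈ W.1 ∧ ‖v‖ = 1},
      ‖Matrix.toEuclideanLin A v.1‖

/-- The projection onto the first k̃ coordinates, as a k̃ × m matrix. -/
def projMat (ktil m : ℕ) : Matrix (Fin ktil) (Fin m) ℝ :=
  Matrix.of fun i j => if (j : ℕ) = (i : ℕ) then 1 else 0

open Matrix in
lemma projMat_mulVec {ktil m : ℕ} (hkm : ktil ≤ m) (w : Fin m → ℝ) (i : Fin ktil) :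
    (projMat ktil m *ᵥ w) i = w (Fin.castLE hkm i) := by
  simp only [projMat, Matrix.mulVec, dotProduct, Matrix.of_apply]
  rw [Finset.sum_eq_single (Fin.castLE hkm i)]
  · simp
  · intro j _ hj
    rw [if_neg, zero_mul]
    intro h
    exact hj (Fin.ext h)
  · simp

open Matrix in
/-- σ_min(S V* E) ≥ s_{k̃} σ_min(P_{k̃} V* E). -/
theorem singVal_min_diag_lower_bound
    (m k ktil : ℕ) (hk : 1 ≤ k) (hkk : k ≤ ktil) (hkm : ktil ≤ m)
    (s : Fin m → ℝ) (hs_pos : ∀ i, 0 < s i)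
    (hs_mono : ∀ i j : Fin m, i ≤ j → s j ≤ s i)
    (V : Matrix (Fin m) (Fin m) ℝ) (hV : V.transpose * V = 1)
    (E : Matrix (Fin m) (Fin k) ℝ) :
    s ⟨ktil - 1, by omega⟩ * singVal (projMat ktil m * V.transpose * E) k ≤
      singVal (Matrix.diagonal s * V.transpose * E) k := by
  set c : ℝ := s ⟨ktil - 1, by omega⟩ with hc_def
  have hc : 0 ≤ c := (hs_pos _).le
  -- pointwise key inequality
  have key : ∀ v : EuclideanSpace ℝ (Fin k),
      c * ‖Matrix.toEuclideanLin (projMat ktil m * V.transpose * E) v‖ ≤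
        ‖Matrix.toEuclideanLin (Matrix.diagonal s * V.transpose * E) v‖ := by
    intro v
    set w : Fin m → ℝ := (V.transpose * E) *ᵥ (WithLp.equiv 2 (Fin k → ℝ) v) with hw
    have hP : ∀ i, (WithLp.equiv 2 (Fin ktil → ℝ))
        (Matrix.toEuclideanLin (projMat ktil m * V.transpose * E) v) i
          = w (Fin.castLE hkm i) := by
      intro i
      rw [WithLp.equiv_apply, Matrix.ofLp_toEuclideanLin_apply, Matrix.mul_assoc, ← Matrix.mulVec_mulVec]
      exact projMat_mulVec hkm w i
    have hS : ∀ i, (WithLp.equiv 2 (Fin m → ℝ))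
        (Matrix.toEuclideanLin (Matrix.diagonal s * V.transpose * E) v) i
          = s i * w i := by
      intro i
      rw [WithLp.equiv_apply, Matrix.ofLp_toEuclideanLin_apply, Matrix.mul_assoc, ← Matrix.mulVec_mulVec]
      exact Matrix.mulVec_diagonal s w i
    rw [EuclideanSpace.norm_eq, EuclideanSpace.norm_eq]
    have hP' : ∀ i : Fin ktil,
        ‖(Matrix.toEuclideanLin (projMat ktil m * V.transpose * E) v) i‖ ^ 2
          = w (Fin.castLE hkm i) ^ 2 := by
      intro i; rw [Real.norm_eq_abs, sq_abs]; exact congrArg (· ^ 2) (hP i)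
    have hS' : ∀ i : Fin m,
        ‖(Matrix.toEuclideanLin (Matrix.diagonal s * V.transpose * E) v) i‖ ^ 2
          = (s i * w i) ^ 2 := by
      intro i; rw [Real.norm_eq_abs, sq_abs]; exact congrArg (· ^ 2) (hS i)
    simp only [hP', hS']
    rw [← Real.sqrt_sq hc, ← Real.sqrt_mul (sq_nonneg c)]
    apply Real.sqrt_le_sqrt
    rw [Finset.mul_sum]
    calc ∑ i : Fin ktil, c ^ 2 * w (Fin.castLE hkm i) ^ 2
        ≤ ∑ i : Fin ktil, (s (Fin.castLE hkm i) * w (Fin.castLE hkm i)) ^ 2 := by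
          apply Finset.sum_le_sum
          intro i _
          rw [mul_pow]
          apply mul_le_mul_of_nonneg_right _ (sq_nonneg _)
          apply sq_le_sq' _ _
          · have := (hs_pos (Fin.castLE hkm i)).le
            nlinarith [hs_pos (⟨ktil - 1, by omega⟩ : Fin m)]
          · apply hs_mono
            simp [Fin.le_def]
            omega
      _ = ∑ i ∈ Finset.univ.map (Fin.castLEEmb hkm), (s i * w i) ^ 2 := by
          rw [Finset.sum_map]; rfl
      _ ≤ ∑ i : Fin m, (s i * w i) ^ 2 := by
          apply Finset.sum_le_sum_of_subset_of_nonneg (Finset.subset_univ _)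
          intro i _ _; exact sq_nonneg _
  -- nonemptiness of index types
  have hWne : Nonempty {W : Submodule ℝ (EuclideanSpace ℝ (Fin k)) // Module.finrank ℝ W = k} :=
    ⟨⟨⊤, by rw [finrank_top]; simp⟩⟩
  have hvne : ∀ (W : {W : Submodule ℝ (EuclideanSpace ℝ (Fin k)) // Module.finrank ℝ W = k}),
      Nonempty {v : EuclideanSpace ℝ (Fin k) // v ∈ W.1 ∧ ‖v‖ = 1} := by
    intro W
    have hbot : W.1 ≠ ⊥ := by
      intro h
      have := W.2
      rw [h] at this
      simp at this
      omega
    obtain ⟨x, hxW, hx0⟩ := Submodule.exists_mem_ne_zero_of_ne_bot hbot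
    refine ⟨⟨(‖x‖⁻¹ : ℝ) • x, W.1.smul_mem _ hxW, norm_smul_inv_norm hx0⟩⟩
  have hbddBelow : ∀ {n : ℕ} (A : Matrix (Fin n) (Fin k) ℝ)
      (W : {W : Submodule ℝ (EuclideanSpace ℝ (Fin k)) // Module.finrank ℝ W = k}),
      BddBelow (Set.range fun v : {v : EuclideanSpace ℝ (Fin k) // v ∈ W.1 ∧ ‖v‖ = 1} =>
        ‖Matrix.toEuclideanLin A v.1‖) := by
    intro n A W
    exact ⟨0, by rintro x ⟨v, rfl⟩; exact norm_nonneg _⟩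
  unfold singVal
  rw [Real.mul_iSup_of_nonneg hc]
  apply ciSup_mono
  · -- BddAbove for the RHS
    set A := Matrix.diagonal s * V.transpose * E with hA
    set f := LinearMap.toContinuousLinearMap (Matrix.toEuclideanLin A)
    refine ⟨‖f‖, ?_⟩
    rintro x ⟨W, rfl⟩
    obtain ⟨v⟩ := hvne W
    refine le_trans (ciInf_le (hbddBelow A W) v) ?_
    have : Matrix.toEuclideanLin A v.1 = f v.1 := rfl
    rw [this]
    calc ‖f v.1‖ ≤ ‖f‖ * ‖v.1‖ := f.le_opNorm v.1
      _ = ‖f‖ := by rw [v.2.2, mul_one]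
  · intro W
    have := hvne W
    apply le_ciInf
    intro v
    calc c * ⨅ u : {u : EuclideanSpace ℝ (Fin k) // u ∈ W.1 ∧ ‖u‖ = 1},
          ‖Matrix.toEuclideanLin (projMat ktil m * V.transpose * E) u.1‖
        ≤ c * ‖Matrix.toEuclideanLin (projMat ktil m * V.transpose * E) v.1‖ :=
          mul_le_mul_of_nonneg_left (ciInf_le (hbddBelow _ W) v) hc
      _ ≤ _ := key v.1
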